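/- Consider the Linearized Bregman iteration restricted to a support set S: p^{k+1} + γ^{k+1}/κ - (p^k + γ^k/κ) = A(γ̃ - γ^k)Δt with p^k ∈ ∂‖γ^k‖₁, where A = Ψ_SᵀΨ_S is symmetric positive semidefinite and h = κΔt satisfies h‖A‖ < 2. Then ‖Ψ_S(γ̃ - γ^{k+1})‖₂ ≤ ‖Ψ_S(γ̃ - γ^k)‖₂ for all k, i.e., the residual norm is monotonically non-increasing along the iteration. -/

import Mathlib

open Matrix Finset

/-- `p` belongs to the subdifferential of the ℓ¹-norm at `γ`. -/
def IsL1Subgradient {s : ℕ} (γ p : Fin s → ℝ) : Prop :=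
  ∀ i, (γ i ≠ 0 → p i = Real.sign (γ i)) ∧ |p i| ≤ 1

lemma subgrad_mul_self {x q : ℝ} (h1 : x ≠ 0 → q = Real.sign x) (h2 : |q| ≤ 1) :
    q * x = |x| := by
  rcases eq_or_ne x 0 with hx | hx
  · simp [hx]
  · rw [h1 hx]
    rcases lt_trichotomy x 0 with h | h | h
    · rw [Real.sign_of_neg h, abs_of_neg h]; ring
    · exact absurd h hx
    · rw [Real.sign_of_pos h, abs_of_pos h]; ring

lemma subgrad_mono {s : ℕ} {γ pγ δ pδ : Fin s → ℝ}
    (hγ : IsL1Subgradient γ pγ) (hδ : IsL1Subgradient δ pδ) :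
    0 ≤ (δ - γ) ⬝ᵥ (pδ - pγ) := by
  apply Finset.sum_nonneg
  intro i _
  simp only [Pi.sub_apply]
  have h1 := subgrad_mul_self (hγ i).1 (hγ i).2
  have h2 := subgrad_mul_self (hδ i).1 (hδ i).2
  have h3 : pγ i * δ i ≤ |δ i| := by
    calc pγ i * δ i ≤ |pγ i * δ i| := le_abs_self _
    _ = |pγ i| * |δ i| := abs_mul _ _
    _ ≤ 1 * |δ i| := by gcongr; exact (hγ i).2
    _ = |δ i| := one_mul _
  have h4 : pδ i * γ i ≤ |γ i| := by
    calc pδ i * γ i ≤ |pδ i * γ i| := le_abs_self _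
    _ = |pδ i| * |γ i| := abs_mul _ _
    _ ≤ 1 * |γ i| := by gcongr; exact (hδ i).2
    _ = |γ i| := one_mul _
  nlinarith

lemma quad_eq {l s : ℕ} (Ψ : Matrix (Fin l) (Fin s) ℝ) (v w : Fin s → ℝ) :
    v ⬝ᵥ (Ψᵀ * Ψ).mulVec w = Ψ.mulVec v ⬝ᵥ Ψ.mulVec w := by
  rw [← Matrix.mulVec_mulVec, Matrix.dotProduct_mulVec, Matrix.vecMul_transpose]

lemma quad_le_opNorm {s : ℕ} (M : Matrix (Fin s) (Fin s) ℝ) (u : Fin s → ℝ) :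
    u ⬝ᵥ M.mulVec u ≤ ‖(Matrix.toEuclideanCLM (𝕜 := ℝ)) M‖ * (u ⬝ᵥ u) := by
  set T := (Matrix.toEuclideanCLM (𝕜 := ℝ)) M
  set x : EuclideanSpace ℝ (Fin s) := (WithLp.equiv 2 _).symm u
  have hTx : T x = (WithLp.equiv 2 _).symm (M.mulVec u) := by
    simp [T, x, WithLp.equiv_symm_apply, Matrix.toEuclideanCLM_toLp, Matrix.toLin'_apply]
  have hinner : (inner ℝ x (T x) : ℝ) = u ⬝ᵥ M.mulVec u := by
    rw [hTx]
    simp [PiLp.inner_apply, x, dotProduct, mul_comm]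
  have hxnorm : ‖x‖ ^ 2 = u ⬝ᵥ u := by
    rw [EuclideanSpace.norm_eq, Real.sq_sqrt (by positivity)]
    simp [x, dotProduct, sq]
  have h1 : (inner ℝ x (T x) : ℝ) ≤ ‖x‖ * ‖T x‖ := real_inner_le_norm _ _
  have h2 : ‖T x‖ ≤ ‖T‖ * ‖x‖ := T.le_opNorm x
  nlinarith [norm_nonneg x, norm_nonneg T]

theorem lbi_residual_monotone
    {l s : ℕ} (Ψ : Matrix (Fin l) (Fin s) ℝ) (γtil : Fin s → ℝ)
    (κ Δt h : ℝ) (hκ : 0 < κ) (hΔt : 0 < Δt) (hh : h = κ * Δt)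
    (hnorm : h * ‖(Matrix.toEuclideanCLM (𝕜 := ℝ)) (Ψᵀ * Ψ)‖ < 2)
    (γ p : ℕ → Fin s → ℝ)
    (hsub : ∀ k, IsL1Subgradient (γ k) (p k))
    (hupdate : ∀ k,
      (p (k + 1) + κ⁻¹ • γ (k + 1)) - (p k + κ⁻¹ • γ k) =
        Δt • (Ψᵀ * Ψ).mulVec (γtil - γ k)) :
    ∀ k, ∑ i, (Ψ.mulVec (γtil - γ (k + 1)) i) ^ 2 ≤
      ∑ i, (Ψ.mulVec (γtil - γ k) i) ^ 2 := by
  intro k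
  set A := Ψᵀ * Ψ with hA
  set u : Fin s → ℝ := γ (k + 1) - γ k with hu
  set r : Fin s → ℝ := γtil - γ k with hr
  set q : Fin s → ℝ := p (k + 1) - p k with hq
  have hN : 0 ≤ ‖(Matrix.toEuclideanCLM (𝕜 := ℝ)) A‖ := norm_nonneg _
  have hqmono : 0 ≤ u ⬝ᵥ q := subgrad_mono (hsub k) (hsub (k + 1))
  have hupd : q + κ⁻¹ • u = Δt • A.mulVec r := by
    have := hupdate k
    rw [← this]
    simp only [hq, hu]
    module
  -- dot with u
  have hdot : u ⬝ᵥ q + κ⁻¹ * (u ⬝ᵥ u) = Δt * (u ⬝ᵥ A.mulVec r) := by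
    have := congrArg (fun v => u ⬝ᵥ v) hupd
    simpa [dotProduct_add, dotProduct_smul, smul_eq_mul] using this
  have huu : 0 ≤ u ⬝ᵥ u := Finset.sum_nonneg fun i _ => mul_self_nonneg _
  have key : u ⬝ᵥ A.mulVec u ≤ 2 * (u ⬝ᵥ A.mulVec r) := by
    have h1 : u ⬝ᵥ A.mulVec u ≤ ‖(Matrix.toEuclideanCLM (𝕜 := ℝ)) A‖ * (u ⬝ᵥ u) :=
      quad_le_opNorm A u
    have hh0 : 0 < h := by rw [hh]; positivity
    have h2 : (u ⬝ᵥ u) / h ≤ u ⬝ᵥ A.mulVec r := by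
      rw [div_le_iff₀ hh0]
      have : κ⁻¹ * (u ⬝ᵥ u) ≤ Δt * (u ⬝ᵥ A.mulVec r) := by linarith
      rw [hh]
      calc u ⬝ᵥ u = κ * (κ⁻¹ * (u ⬝ᵥ u)) := by field_simp
      _ ≤ κ * (Δt * (u ⬝ᵥ A.mulVec r)) := by
          apply mul_le_mul_of_nonneg_left this hκ.le
      _ = u ⬝ᵥ A.mulVec r * (κ * Δt) := by ring
    have h3 : ‖(Matrix.toEuclideanCLM (𝕜 := ℝ)) A‖ * (u ⬝ᵥ u) ≤ 2 / h * (u ⬝ᵥ u) := by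
      apply mul_le_mul_of_nonneg_right _ huu
      rw [le_div_iff₀ hh0]
      nlinarith
    calc u ⬝ᵥ A.mulVec u ≤ 2 / h * (u ⬝ᵥ u) := h1.trans h3
    _ = 2 * ((u ⬝ᵥ u) / h) := by ring
    _ ≤ 2 * (u ⬝ᵥ A.mulVec r) := by linarith
  -- rewrite the goal as quadratic forms
  have hru : γtil - γ (k + 1) = r - u := by simp only [hr, hu]; abel
  have goal_lhs : ∑ i, (Ψ.mulVec (γtil - γ (k + 1)) i) ^ 2 = (r - u) ⬝ᵥ A.mulVec (r - u) := by
    rw [hru, quad_eq]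
    simp [dotProduct, sq]
  have goal_rhs : ∑ i, (Ψ.mulVec (γtil - γ k) i) ^ 2 = r ⬝ᵥ A.mulVec r := by
    rw [show γtil - γ k = r from rfl, quad_eq]
    simp [dotProduct, sq]
  rw [goal_lhs, goal_rhs]
  have hsym : r ⬝ᵥ A.mulVec u = u ⬝ᵥ A.mulVec r := by
    rw [quad_eq, quad_eq, dotProduct_comm]
  have hexpand : (r - u) ⬝ᵥ A.mulVec (r - u) =
      r ⬝ᵥ A.mulVec r - r ⬝ᵥ A.mulVec u - u ⬝ᵥ A.mulVec r + u ⬝ᵥ A.mulVec u := by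
    simp [sub_dotProduct, Matrix.mulVec_sub, dotProduct_sub]
    ring
  rw [hexpand, hsym]
  linarith
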